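/- If a triple pattern t₁ ∈ S^G subsumes another pattern t₂ ∈ S^G — i.e., there is a variable substitution σ with σ(t₁) = t₂ such that σ maps variables of S^Δ only to URIs or to variables of S^Δ — then removing t₂ (and the variables occurring only in t₂ from S^Δ) yields a semantically equivalent schema, assuming every variable occurs at most once in S^G. -/
import Mathlib


/-- An RDF node: a URI or a literal. -/
inductive RNode where
  | uri : ℕ → RNode
  | lit : ℕ → RNode
deriving DecidableEq

/-- A term of a triple pattern: a constant (URI or literal) or a variable. -/
inductive RTerm where
  | cst : RNode → RTerm
  | var : ℕ → RTerm
deriving DecidableEq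

abbrev Triple := RNode × RNode × RNode
abbrev TPat := RTerm × RTerm × RTerm

def RNode.isLit : RNode → Prop
  | .lit _ => True
  | .uri _ => False

def applyT (m : ℕ → RNode) : RTerm → RNode
  | .cst c => c
  | .var v => m v

def applyTriple (m : ℕ → RNode) (p : TPat) : Triple :=
  (applyT m p.1, applyT m p.2.1, applyT m p.2.2)

/-- Variable `v` occurs in triple pattern `p`. -/
def occursIn (v : ℕ) (p : TPat) : Prop :=
  p.1 = RTerm.var v ∨ p.2.1 = RTerm.var v ∨ p.2.2 = RTerm.var v

def varsPat (P : Set TPat) : Set ℕ := { v | ∃ p ∈ P, occursIn v p }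

def constIn (c : RNode) (p : TPat) : Prop :=
  p.1 = RTerm.cst c ∨ p.2.1 = RTerm.cst c ∨ p.2.2 = RTerm.cst c

def constsPat (P : Set TPat) : Set RNode := { c | ∃ p ∈ P, constIn c p }

def constsGraph (I : Set Triple) : Set RNode :=
  { c | ∃ t ∈ I, t.1 = c ∨ t.2.1 = c ∨ t.2.2 = c }

/-- `I` is an instance of the triplestore schema `⟨G, Δ⟩`: every triple of `I`
is the image of some pattern of `G` under a mapping that binds no variable of
the no-literal set `Δ` (occurring in the pattern) to a literal. -/
def isInstance (G : Set TPat) (Δ : Set ℕ) (I : Set Triple) : Prop :=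
  ∀ t ∈ I, ∃ p ∈ G, ∃ m : ℕ → RNode,
    applyTriple m p = t ∧ ∀ v ∈ Δ, occursIn v p → ¬ (m v).isLit

/-- Applying a variable substitution (a map from variables to terms) to a term. -/
def applySubT (σ : ℕ → RTerm) : RTerm → RTerm
  | .cst c => .cst c
  | .var v => σ v

def applySubTriple (σ : ℕ → RTerm) (p : TPat) : TPat :=
  (applySubT σ p.1, applySubT σ p.2.1, applySubT σ p.2.2)

/-- Number of occurrences of variable `v` in triple pattern `p`. -/
def numOcc (v : ℕ) (p : TPat) : ℕ :=
  (if p.1 = RTerm.var v then 1 else 0) + (if p.2.1 = RTerm.var v then 1 else 0) +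
    (if p.2.2 = RTerm.var v then 1 else 0)

/-- If `t₁ ∈ S^G` subsumes `t₂ ∈ S^G` via a substitution `σ`
with `σ(t₁) = t₂` that maps variables of `S^Δ` only to URIs or variables of
`S^Δ`, then removing `t₂` (and the variables occurring only in `t₂` from
`S^Δ`) yields a semantically equivalent schema, assuming every variable occurs
at most once in `S^G`. -/
theorem subsumed_pattern_removal (G : Set TPat) (Δ : Set ℕ)
    (hΔ : Δ ⊆ varsPat G)
    (huniq : ∀ v : ℕ, ∀ p₁ ∈ G, ∀ p₂ ∈ G, occursIn v p₁ → occursIn v p₂ → p₁ = p₂)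
    (huniq' : ∀ v : ℕ, ∀ p ∈ G, numOcc v p ≤ 1)
    (t₁ t₂ : TPat) (ht₁ : t₁ ∈ G) (ht₂ : t₂ ∈ G) (hne : t₁ ≠ t₂)
    (σ : ℕ → RTerm) (hσ : applySubTriple σ t₁ = t₂)
    (hσΔ : ∀ v ∈ Δ, (∃ k, σ v = RTerm.cst (RNode.uri k)) ∨ ∃ w ∈ Δ, σ v = RTerm.var w) :
    { I : Set Triple | isInstance G Δ I } =
      { I : Set Triple | isInstance (G \ {t₂}) { v ∈ Δ | ¬ occursIn v t₂ } I } := by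
  ext I
  simp only [Set.mem_setOf_eq]
  constructor
  · intro h t ht
    obtain ⟨p, hp, m, hm, hΔm⟩ := h t ht
    by_cases hpt : p = t₂
    · subst hpt
      refine ⟨t₁, ⟨ht₁, fun h' => hne h'⟩, fun v => applyT m (σ v), ?_, ?_⟩
      · rw [← hm, ← hσ]
        obtain ⟨a, b, c⟩ := t₁
        cases a <;> cases b <;> cases c <;>
          simp [applyTriple, applySubTriple, applyT, applySubT]
      · rintro v ⟨hvΔ, hvnot⟩ hocc
        rcases hσΔ v hvΔ with ⟨k, hk⟩ | ⟨w, hwΔ, hw⟩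
        · simp [hk, applyT, RNode.isLit]
        · show ¬(applyT m (σ v)).isLit
          rw [hw]
          simp only [applyT]
          have hwocc : occursIn w p := by
            rw [← hσ]
            rcases hocc with h1 | h1 | h1
            · left; simp [applySubTriple, h1, applySubT, hw]
            · right; left; simp [applySubTriple, h1, applySubT, hw]
            · right; right; simp [applySubTriple, h1, applySubT, hw]
          exact hΔm w hwΔ hwocc
    · exact ⟨p, ⟨hp, hpt⟩, m, hm, fun v hv hocc =>
        hΔm v (Set.mem_sep_iff.mp hv).1 hocc⟩
  · intro h t ht
    obtain ⟨p, hp, m, hm, hΔm⟩ := h t ht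
    refine ⟨p, hp.1, m, hm, fun v hv hocc => ?_⟩
    by_cases hvt : occursIn v t₂
    · exact absurd (huniq v p hp.1 t₂ ht₂ hocc hvt) hp.2
    · exact hΔm v (Set.mem_sep_iff.mpr ⟨hv, hvt⟩) hocc
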